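/- Let q be an odd prime power, v ≥ 1, and s odd. There exists t with qt ≡ t (mod 2^v) such that a Type-I duadic splitting of Z/2^vZ given by ρ_{s,t}: i ↦ s(i+t) exists, if and only if ν_2(q^j − s) + ν_2(q−1) > v for all integers j ≥ 0. -/

import Mathlib

/-- The 2-adic valuation of an integer, valued in `ℕ∞` (so that `ν₂(0) = ⊤`). -/
noncomputable def nu2 (m : ℤ) : ℕ∞ := emultiplicity 2 m

private lemma image_filter_eq' {α : Type*} [Fintype α] [DecidableEq α] (f : α → α)
    (hf : Function.Surjective f) (R Q : α → Prop) [DecidablePred R] [DecidablePred Q]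
    (h : ∀ x, Q (f x) ↔ R x) :
    (Finset.univ.filter R).image f = Finset.univ.filter Q := by
  ext y
  simp only [Finset.mem_image, Finset.mem_filter, Finset.mem_univ, true_and]
  constructor
  · rintro ⟨x, hx, rfl⟩; exact (h x).2 hx
  · intro hy; obtain ⟨x, rfl⟩ := hf y; exact ⟨x, (h x).1 hy, rfl⟩

private lemma enat_aux {x : ℕ∞} {A v : ℕ} (h : (v : ℕ∞) < x + (A : ℕ∞)) :
    ((v + 1 - A : ℕ) : ℕ∞) ≤ x := by
  cases x with
  | top => exact le_top
  | coe n =>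
    have hn : v < n + A := by exact_mod_cast h
    exact Nat.cast_le.mpr (by omega)

private lemma isUnit_intCast_of_odd {m : ℕ} {a : ℤ} (ha : Odd a) :
    IsUnit ((a : ZMod (2 ^ m))) := by
  have hnd : ¬ (2 : ℤ) ∣ a := by
    obtain ⟨k, hk⟩ := ha; rintro ⟨c, hc⟩; omega
  obtain ⟨u, w, h⟩ := ((Int.prime_two.coprime_iff_not_dvd.mpr hnd).symm.pow_right (n := m))
  refine IsUnit.of_mul_eq_one ((u : ZMod (2 ^ m))) ?_
  have key : ((a * u : ℤ) : ZMod (2 ^ m)) = ((1 : ℤ) : ZMod (2 ^ m)) := by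
    rw [ZMod.intCast_eq_intCast_iff]
    refine (Int.modEq_iff_dvd.mpr ⟨w, ?_⟩)
    push_cast
    linarith
  push_cast at key
  exact key

private lemma val_add_pow_lt_iff {b : ℕ} (y : ZMod (2 ^ (b + 1))) :
    (y + ((2 ^ b : ℕ) : ZMod (2 ^ (b + 1)))).val < 2 ^ b ↔ ¬ (y.val < 2 ^ b) := by
  haveI : NeZero (2 ^ (b + 1)) := ⟨pow_ne_zero _ two_ne_zero⟩
  have hc : 0 < 2 ^ b := Nat.pow_pos (by norm_num)
  have hlt : 2 ^ b < 2 ^ (b + 1) := Nat.pow_lt_pow_right one_lt_two (Nat.lt_succ_self b)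
  have hval : ((2 ^ b : ℕ) : ZMod (2 ^ (b + 1))).val = 2 ^ b := by
    rw [ZMod.val_natCast, Nat.mod_eq_of_lt hlt]
  have hy : y.val < 2 ^ (b + 1) := ZMod.val_lt y
  rw [ZMod.val_add, hval]
  set m := y.val with hm
  have h2 : 2 ^ (b + 1) = 2 ^ b * 2 := by ring
  rcases Nat.lt_or_ge m (2 ^ b) with h | h
  · have : (m + 2 ^ b) % 2 ^ (b + 1) = m + 2 ^ b := Nat.mod_eq_of_lt (by omega)
    rw [this]; omega
  · have hrw : m + 2 ^ b = (m - 2 ^ b) + 1 * (2 ^ b * 2) := by omega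
    have : (m + 2 ^ b) % 2 ^ (b + 1) = m - 2 ^ b := by
      rw [hrw, h2, Nat.add_mul_mod_self_right, Nat.mod_eq_of_lt (by omega)]
    rw [this]; omega

/-- for `q` an odd prime power, `v ≥ 1` and `s` odd, there exists `t` with
`q·t ≡ t (mod 2^v)` such that a Type-I duadic splitting of `ℤ/2^vℤ` given by
`ρ_{s,t} : i ↦ s(i+t)` exists, iff `ν₂(q^j − s) + ν₂(q−1) > v` for all `j ≥ 0`. -/
theorem stmt13 (q : ℕ) (hq : ∃ p k : ℕ, p.Prime ∧ 0 < k ∧ q = p ^ k) (hodd : Odd q)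
    (v : ℕ) (hv : 1 ≤ v) (s : ℤ) (hs : Odd s) :
    (∃ t : ℤ, (q : ℤ) * t ≡ t [ZMOD (2 ^ v : ℕ)] ∧
      ∃ P : Finset (ZMod (2 ^ v)),
        P.image (fun i => (q : ZMod (2 ^ v)) * i) = P ∧
        P.image (fun i => (s : ZMod (2 ^ v)) * (i + (t : ZMod (2 ^ v)))) = Pᶜ) ↔
    (∀ j : ℕ, nu2 ((q : ℤ) ^ j - s) + nu2 ((q : ℤ) - 1) > (v : ℕ∞)) := by
  haveI : NeZero (2 ^ v) := ⟨pow_ne_zero _ two_ne_zero⟩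
  have hq2 : 2 ≤ q := by
    obtain ⟨p, k, hp, hk, rfl⟩ := hq
    calc 2 ≤ p := hp.two_le
    _ ≤ p ^ k := Nat.le_self_pow (by omega) p
  have hq1 : (q : ℤ) - 1 ≠ 0 := by
    have : (2 : ℤ) ≤ (q : ℤ) := by exact_mod_cast hq2
    omega
  have hqodd : Odd (q : ℤ) := by
    obtain ⟨k, hk⟩ := hodd; exact ⟨(k : ℤ), by exact_mod_cast hk⟩
  have hfinA : FiniteMultiplicity 2 ((q : ℤ) - 1) :=
    Int.finiteMultiplicity_iff.mpr ⟨by norm_num, hq1⟩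
  set A := multiplicity 2 ((q : ℤ) - 1) with hA
  have hemA : emultiplicity 2 ((q : ℤ) - 1) = (A : ℕ∞) :=
    hfinA.emultiplicity_eq_multiplicity
  have hdvdA : (2 : ℤ) ^ A ∣ (q : ℤ) - 1 := pow_multiplicity_dvd 2 _
  have hA1 : 1 ≤ A := by
    have h2 : (2 : ℤ) ^ 1 ∣ (q : ℤ) - 1 := by
      obtain ⟨k, hk⟩ := hqodd; exact ⟨k, by omega⟩
    have := le_emultiplicity_of_pow_dvd h2
    rw [hemA] at this
    exact_mod_cast this
  constructor
  · -- hard direction: splitting exists → valuation condition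
    rintro ⟨t, ht, P, hP, hρ⟩ j
    by_contra hcon
    push_neg at hcon
    have hfin1 : FiniteMultiplicity 2 ((q : ℤ) ^ j - s) := by
      rw [finiteMultiplicity_iff_emultiplicity_ne_top]
      intro htop
      rw [nu2, htop] at hcon
      simp at hcon
    set e := multiplicity 2 ((q : ℤ) ^ j - s) with he
    have heme : emultiplicity 2 ((q : ℤ) ^ j - s) = (e : ℕ∞) :=
      hfin1.emultiplicity_eq_multiplicity
    have heA : e + A ≤ v := by
      rw [nu2, nu2, heme, hemA, ← Nat.cast_add] at hcon
      exact_mod_cast hcon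
    -- 2^e ∣ t
    have h2vt : (2 : ℤ) ^ v ∣ ((q : ℤ) - 1) * t := by
      have := ht.dvd
      have h1 : ((2 ^ v : ℕ) : ℤ) ∣ t - (q : ℤ) * t := this
      have h2 : ((2 ^ v : ℕ) : ℤ) = (2 : ℤ) ^ v := by push_cast; ring
      rw [h2] at h1
      obtain ⟨c, hc⟩ := h1
      exact ⟨-c, by linarith⟩
    obtain ⟨u1, hu1⟩ := hdvdA
    have hu1odd : ¬ (2 : ℤ) ∣ u1 := by
      intro ⟨c, hc⟩
      have : (2 : ℤ) ^ (A + 1) ∣ (q : ℤ) - 1 := ⟨c, by rw [hu1, hc]; ring⟩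
      exact hfinA.not_pow_dvd_of_multiplicity_lt (Nat.lt_succ_self A) this
    have htdvd : (2 : ℤ) ^ e ∣ t := by
      have hsplit : (2 : ℤ) ^ v = 2 ^ A * 2 ^ (v - A) := by
        rw [← pow_add]; congr 1; omega
      have h1 : (2 : ℤ) ^ A * 2 ^ (v - A) ∣ 2 ^ A * (u1 * t) := by
        rw [← hsplit]; have := h2vt; rw [hu1] at this
        obtain ⟨c, hc⟩ := this; exact ⟨c, by rw [← hc]; ring⟩
      have h2 : (2 : ℤ) ^ (v - A) ∣ u1 * t :=
        (mul_dvd_mul_iff_left (pow_ne_zero A (two_ne_zero))).mp h1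
      have hcop : IsCoprime ((2 : ℤ) ^ (v - A)) u1 :=
        (Int.prime_two.coprime_iff_not_dvd.mpr hu1odd).pow_left
      have h3 : (2 : ℤ) ^ (v - A) ∣ t := hcop.dvd_of_dvd_mul_left h2
      exact dvd_trans (pow_dvd_pow 2 (by omega)) h3
    obtain ⟨w, hw⟩ := htdvd
    obtain ⟨u, hu⟩ := pow_multiplicity_dvd 2 ((q : ℤ) ^ j - s)
    have huodd : ¬ (2 : ℤ) ∣ u := by
      intro ⟨c, hc⟩
      have : (2 : ℤ) ^ (e + 1) ∣ (q : ℤ) ^ j - s := ⟨c, by rw [hu, hc]; ring⟩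
      exact hfin1.not_pow_dvd_of_multiplicity_lt (Nat.lt_succ_self e) this
    obtain ⟨α, β, hαβ⟩ := ((Int.prime_two.coprime_iff_not_dvd.mpr huodd).symm.pow_right (n := v))
    rw [← he] at hu
    set x : ZMod (2 ^ v) := ((α * (s * w) : ℤ) : ZMod (2 ^ v)) with hx
    have key : (s : ZMod (2 ^ v)) * (x + (t : ZMod (2 ^ v))) = (q : ZMod (2 ^ v)) ^ j * x := by
      have hmod : ((s * (α * (s * w) + t) : ℤ) : ZMod (2 ^ v))
          = (((q : ℤ) ^ j * (α * (s * w)) : ℤ) : ZMod (2 ^ v)) := by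
        rw [ZMod.intCast_eq_intCast_iff]
        refine Int.ModEq.symm (Int.modEq_iff_dvd.mpr ?_)
        have h2 : ((2 ^ v : ℕ) : ℤ) = (2 : ℤ) ^ v := by push_cast; ring
        rw [h2]
        refine ⟨2 ^ e * s * w * β, ?_⟩
        linear_combination (-(α * s * w)) * hu + s * hw + (-(2 ^ e * s * w)) * hαβ
      push_cast at hmod
      rw [hx]
      push_cast
      linear_combination hmod
    -- membership facts
    have hqunit : IsUnit ((q : ℤ) : ZMod (2 ^ v)) := isUnit_intCast_of_odd hqodd
    have hsunit : IsUnit (s : ZMod (2 ^ v)) := isUnit_intCast_of_odd hs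
    have hqcast : ((q : ℤ) : ZMod (2 ^ v)) = (q : ZMod (2 ^ v)) := by push_cast; ring
    rw [hqcast] at hqunit
    have hqmem : ∀ y : ZMod (2 ^ v), (q : ZMod (2 ^ v)) * y ∈ P ↔ y ∈ P := by
      intro y
      constructor
      · intro hy
        rw [← hP] at hy
        obtain ⟨z, hz, hzy⟩ := Finset.mem_image.mp hy
        have : z = y := hqunit.mul_left_cancel hzy
        rwa [← this]
      · intro hy
        rw [← hP]
        exact Finset.mem_image_of_mem _ hy
    have hqjmem : ∀ (n : ℕ) (y : ZMod (2 ^ v)), (q : ZMod (2 ^ v)) ^ n * y ∈ P ↔ y ∈ P := by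
      intro n
      induction n with
      | zero => simp
      | succ n ih =>
        intro y
        rw [pow_succ]
        have hrw : (q : ZMod (2 ^ v)) ^ n * (q : ZMod (2 ^ v)) * y
            = (q : ZMod (2 ^ v)) ^ n * ((q : ZMod (2 ^ v)) * y) := by ring
        rw [hrw, ih ((q : ZMod (2 ^ v)) * y), hqmem]
    set ρ : ZMod (2 ^ v) → ZMod (2 ^ v) :=
      fun i => (s : ZMod (2 ^ v)) * (i + (t : ZMod (2 ^ v))) with hρdef
    have hρinj : Function.Injective ρ := by
      intro a b hab
      simp only [hρdef] at hab
      have := hsunit.mul_left_cancel hab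
      exact add_right_cancel this
    by_cases hxP : x ∈ P
    · have h1 : ρ x ∈ Pᶜ := by rw [← hρ]; exact Finset.mem_image_of_mem _ hxP
      have h2 : ρ x ∈ P := by
        have : ρ x = (q : ZMod (2 ^ v)) ^ j * x := key
        rw [this]
        exact (hqjmem j x).mpr hxP
      rw [Finset.mem_compl] at h1
      exact h1 h2
    · have h1 : ρ x ∈ P := by
        by_contra hc
        have : ρ x ∈ Pᶜ := Finset.mem_compl.mpr hc
        rw [← hρ] at this
        obtain ⟨z, hz, hzx⟩ := Finset.mem_image.mp this
        exact hxP (hρinj hzx ▸ hz)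
      have h2 : ρ x ∉ P := by
        have : ρ x = (q : ZMod (2 ^ v)) ^ j * x := key
        rw [this]
        intro hc
        exact hxP ((hqjmem j x).mp hc)
      exact h2 h1
  · -- easy direction: valuation condition → explicit splitting
    intro H
    -- find b with the required divisibilities
    obtain ⟨b, hbv, hqd, hsd, htd⟩ :
        ∃ b : ℕ, b + 1 ≤ v ∧ (2 : ℤ) ^ (b + 1) ∣ (q : ℤ) - 1 ∧
          (2 : ℤ) ^ (b + 1) ∣ s - 1 ∧ (2 : ℤ) ^ v ∣ ((q : ℤ) - 1) * 2 ^ b := by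
      rcases le_or_gt v A with hAv | hAv
      · refine ⟨0, hv, ?_, ?_, ?_⟩
        · obtain ⟨k, hk⟩ := hqodd; exact ⟨k, by omega⟩
        · obtain ⟨k, hk⟩ := hs; exact ⟨k, by omega⟩
        · exact dvd_trans (pow_dvd_pow 2 hAv) (by simpa using hdvdA)
      · -- A < v
        have H0 := H 0
        have H1 := H 1
        rw [nu2, nu2, hemA] at H0 H1
        simp only [pow_zero, pow_one] at H0 H1
        have hs1 : (2 : ℤ) ^ (v + 1 - A) ∣ s - 1 := by
          have h := pow_dvd_of_le_emultiplicity (enat_aux H0)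
          have h2 := dvd_neg.mpr h
          rwa [neg_sub] at h2
        have hqs : (2 : ℤ) ^ (v + 1 - A) ∣ (q : ℤ) - s :=
          pow_dvd_of_le_emultiplicity (enat_aux H1)
        have hq1d : (2 : ℤ) ^ (v + 1 - A) ∣ (q : ℤ) - 1 := by
          have : (q : ℤ) - 1 = ((q : ℤ) - s) + (s - 1) := by ring
          rw [this]; exact dvd_add hqs hs1
        have hAle : v + 1 - A ≤ A := by
          by_contra hc
          push_neg at hc
          have := le_emultiplicity_of_pow_dvd hq1d
          rw [hemA] at this
          have : v + 1 - A ≤ A := by exact_mod_cast this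
          omega
        refine ⟨v - A, by omega, ?_, ?_, ?_⟩
        · have heq : v - A + 1 = v + 1 - A := by omega
          rw [heq]
          exact dvd_trans (pow_dvd_pow 2 hAle) hdvdA
        · have heq : v - A + 1 = v + 1 - A := by omega
          rw [heq]; exact hs1
        · obtain ⟨c, hc⟩ := hdvdA
          refine ⟨c, ?_⟩
          rw [hc]
          have : (2 : ℤ) ^ v = 2 ^ A * 2 ^ (v - A) := by
            rw [← pow_add]; congr 1; omega
          rw [this]; ring
    haveI : NeZero (2 ^ (b + 1)) := ⟨pow_ne_zero _ two_ne_zero⟩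
    have hdvdpow : (2 : ℕ) ^ (b + 1) ∣ 2 ^ v := Nat.pow_dvd_pow 2 hbv
    refine ⟨(2 : ℤ) ^ b, ?_, ?_⟩
    · -- q * 2^b ≡ 2^b
      refine Int.ModEq.symm (Int.modEq_iff_dvd.mpr ?_)
      have h2 : ((2 ^ v : ℕ) : ℤ) = (2 : ℤ) ^ v := by push_cast; ring
      rw [h2]
      obtain ⟨c, hc⟩ := htd
      exact ⟨c, by rw [← hc]; ring⟩
    · set φ := ZMod.castHom hdvdpow (ZMod (2 ^ (b + 1))) with hφ
      have hqone : ((q : ℕ) : ZMod (2 ^ (b + 1))) = 1 := by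
        have : (((q : ℤ) - 1 : ℤ) : ZMod (2 ^ (b + 1))) = 0 := by
          rw [ZMod.intCast_zmod_eq_zero_iff_dvd]
          have h2 : ((2 ^ (b + 1) : ℕ) : ℤ) = (2 : ℤ) ^ (b + 1) := by push_cast; ring
          rw [h2]; exact hqd
        push_cast at this
        linear_combination this
      have hsone : ((s : ℤ) : ZMod (2 ^ (b + 1))) = 1 := by
        have : ((s - 1 : ℤ) : ZMod (2 ^ (b + 1))) = 0 := by
          rw [ZMod.intCast_zmod_eq_zero_iff_dvd]
          have h2 : ((2 ^ (b + 1) : ℕ) : ℤ) = (2 : ℤ) ^ (b + 1) := by push_cast; ring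
          rw [h2]; exact hsd
        push_cast at this
        linear_combination this
      set pred : ZMod (2 ^ v) → Prop := fun x => (φ x).val < 2 ^ b with hpred
      have hdec : DecidablePred pred := fun x => Nat.decLt _ _
      refine ⟨Finset.univ.filter pred, ?_, ?_⟩
      · -- multiplication by q preserves P
        have hsurj : Function.Surjective (fun i => (q : ZMod (2 ^ v)) * i) := by
          have hqunit : IsUnit (q : ZMod (2 ^ v)) := by
            have := isUnit_intCast_of_odd (m := v) hqodd
            rwa [show (((q : ℤ)) : ZMod (2 ^ v)) = (q : ZMod (2 ^ v)) by push_cast; ring] at this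
          obtain ⟨qu, hqu⟩ := hqunit
          intro y
          exact ⟨(qu⁻¹ : (ZMod (2 ^ v))ˣ) * y, by
            simp only [← hqu]
            rw [← mul_assoc]
            simp⟩
        refine image_filter_eq' _ hsurj pred pred ?_
        intro x
        simp only [hpred]
        have : φ ((q : ZMod (2 ^ v)) * x) = φ x := by
          rw [map_mul]
          have : φ (q : ZMod (2 ^ v)) = ((q : ℕ) : ZMod (2 ^ (b + 1))) := map_natCast φ q
          rw [this, hqone, one_mul]
        rw [this]
      · -- ρ maps P onto the complement
        have hcompl : (Finset.univ.filter pred)ᶜ = Finset.univ.filter (fun x => ¬ pred x) :=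
          Finset.compl_filter pred
        rw [hcompl]
        have hsunit : IsUnit (s : ZMod (2 ^ v)) := isUnit_intCast_of_odd hs
        have hsurj : Function.Surjective
            (fun i => (s : ZMod (2 ^ v)) * (i + (((2 : ℤ) ^ b : ℤ) : ZMod (2 ^ v)))) := by
          obtain ⟨su, hsu⟩ := hsunit
          intro y
          refine ⟨(su⁻¹ : (ZMod (2 ^ v))ˣ) * y - (((2 : ℤ) ^ b : ℤ) : ZMod (2 ^ v)), ?_⟩
          simp only [sub_add_cancel, ← hsu, ← mul_assoc]
          simp
        refine image_filter_eq' _ hsurj pred (fun x => ¬ pred x) ?_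
        intro x
        have hcast : φ ((s : ZMod (2 ^ v)) * (x + (((2 : ℤ) ^ b : ℤ) : ZMod (2 ^ v))))
            = φ x + ((2 ^ b : ℕ) : ZMod (2 ^ (b + 1))) := by
          rw [map_mul, map_add]
          have h1 : φ ((s : ℤ) : ZMod (2 ^ v)) = ((s : ℤ) : ZMod (2 ^ (b + 1))) := map_intCast φ s
          have h2 : φ (((2 : ℤ) ^ b : ℤ) : ZMod (2 ^ v)) = (((2 : ℤ) ^ b : ℤ) : ZMod (2 ^ (b + 1))) :=
            map_intCast φ _
          rw [h1, h2, hsone, one_mul]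
          congr 1
          push_cast
          ring
        simp only [hpred]
        rw [hcast]
        exact (iff_not_comm.mp (val_add_pow_lt_iff (φ x))).symm
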